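/- Let f : ℝ^d → ℝ be twice continuously differentiable with λmin·I ⪯ ∇²f(x) ⪯ λmax·I for all x and L-Lipschitz Hessian, with unique minimizer x*. Then for all x₁, x₂ ∈ ℝ^d, ‖H(x₁)^{-1/2} H(x₂) H(x₁)^{-1/2} - I‖ ≤ (L/λmin^{3/2})·‖x₁ - x₂‖_{H*}. -/

import Mathlib

open Real
open scoped BigOperators Matrix

/-- Spectral norm (ℓ₂ operator norm) of a real matrix. -/
noncomputable def specNorm {d : ℕ} (A : Matrix (Fin d) (Fin d) ℝ) : ℝ :=
  ‖Matrix.toEuclideanCLM (𝕜 := ℝ) A‖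

/-- Euclidean (ℓ₂) norm of a vector. -/
noncomputable def vnorm {d : ℕ} (v : Fin d → ℝ) : ℝ := Real.sqrt (∑ i, v i ^ 2)

/-- The norm ‖v‖_A = √(vᵀAv) induced by a positive semidefinite matrix A. -/
noncomputable def Mnorm {d : ℕ} (A : Matrix (Fin d) (Fin d) ℝ) (v : Fin d → ℝ) : ℝ :=
  Real.sqrt (dotProduct v (A.mulVec v))

/-- The positive semidefinite square root of a positive semidefinite matrix
(removed from Mathlib; restored with its former definition). -/
noncomputable def Matrix.PosSemidef.sqrt {n : Type*} [Fintype n] [DecidableEq n]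
    {A : Matrix n n ℝ} (hA : A.PosSemidef) : Matrix n n ℝ :=
  (hA.1.eigenvectorUnitary : Matrix n n ℝ) * Matrix.diagonal ((↑) ∘ (√·) ∘ hA.1.eigenvalues) *
    (star hA.1.eigenvectorUnitary : Matrix n n ℝ)

lemma Matrix.PosSemidef.sqrt_mul_self {n : Type*} [Fintype n] [DecidableEq n]
    {A : Matrix n n ℝ} (hA : A.PosSemidef) : hA.sqrt * hA.sqrt = A := by
  unfold Matrix.PosSemidef.sqrt
  have hU : (star hA.1.eigenvectorUnitary : Matrix n n ℝ) * (hA.1.eigenvectorUnitary : Matrix n n ℝ) = 1 :=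
    Unitary.coe_star_mul_self _
  have hD : Matrix.diagonal ((fun x : ℝ => x) ∘ (fun x => √x) ∘ hA.1.eigenvalues) *
      Matrix.diagonal ((fun x : ℝ => x) ∘ (fun x => √x) ∘ hA.1.eigenvalues) =
      Matrix.diagonal (RCLike.ofReal ∘ hA.1.eigenvalues) := by
    rw [Matrix.diagonal_mul_diagonal]
    congr 1
    funext i
    simp [Real.mul_self_sqrt (hA.eigenvalues_nonneg i)]
  conv_rhs => rw [hA.1.spectral_theorem, Unitary.conjStarAlgAut_apply]
  rw [← hD]
  simp only [Matrix.mul_assoc]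
  rw [← Matrix.mul_assoc (star (hA.1.eigenvectorUnitary : Matrix n n ℝ)), hU, Matrix.one_mul]

lemma Matrix.PosSemidef.sqrt_transpose {n : Type*} [Fintype n] [DecidableEq n]
    {A : Matrix n n ℝ} (hA : A.PosSemidef) : hA.sqrtᵀ = hA.sqrt := by
  have h := Matrix.isHermitian_mul_mul_conjTranspose (hA.1.eigenvectorUnitary : Matrix n n ℝ)
    (Matrix.isHermitian_diagonal ((↑) ∘ (√·) ∘ hA.1.eigenvalues : n → ℝ))
  unfold Matrix.PosSemidef.sqrt
  rw [Matrix.star_eq_conjTranspose]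
  rw [Matrix.IsHermitian, Matrix.conjTranspose_eq_transpose_of_trivial] at h
  exact h

lemma enorm_eq {d : ℕ} (v : Fin d → ℝ) :
    ‖(WithLp.equiv 2 (Fin d → ℝ)).symm v‖ ^ 2 = dotProduct v v := by
  rw [EuclideanSpace.norm_eq, Real.sq_sqrt (by positivity)]
  simp [dotProduct, sq_abs, pow_two]

lemma dot_lower {d : ℕ} {A : Matrix (Fin d) (Fin d) ℝ} {c : ℝ}
    (h : (A - c • (1 : Matrix (Fin d) (Fin d) ℝ)).PosSemidef) (v : Fin d → ℝ) :
    c * dotProduct v v ≤ dotProduct v (A.mulVec v) := by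
  have := h.dotProduct_mulVec_nonneg v
  simp only [Matrix.sub_mulVec, dotProduct_sub, Matrix.smul_mulVec,
    Matrix.one_mulVec, dotProduct_smul, star_trivial, smul_eq_mul] at this
  linarith

lemma specNorm_mul_le {d : ℕ} (A B : Matrix (Fin d) (Fin d) ℝ) :
    specNorm (A * B) ≤ specNorm A * specNorm B := by
  rw [specNorm, specNorm, specNorm, map_mul]
  exact norm_mul_le _ _

lemma specNorm_inv_sqrt_le {d : ℕ} {A : Matrix (Fin d) (Fin d) ℝ} {c : ℝ} (hc : 0 < c)
    (hA : A.PosSemidef) (h : (A - c • (1 : Matrix (Fin d) (Fin d) ℝ)).PosSemidef) :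
    specNorm (hA.sqrt)⁻¹ ≤ (Real.sqrt c)⁻¹ := by
  set S := hA.sqrt with hS
  have hSS : S * S = A := hA.sqrt_mul_self
  have hSsym : Sᵀ = S := hA.sqrt_transpose
  have hApd : A.PosDef := by
    refine Matrix.PosDef.of_dotProduct_mulVec_pos hA.1 fun x hx => ?_
    have h1 := dot_lower h x
    have hnn : 0 ≤ dotProduct x x := by
      simp only [dotProduct]
      exact Finset.sum_nonneg fun i _ => mul_self_nonneg _
    have h2 : 0 < dotProduct x x := by
      rcases lt_or_eq_of_le hnn with h' | h'
      · exact h'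
      · exact absurd (dotProduct_self_eq_zero.mp h'.symm) hx
    simp only [star_trivial]
    nlinarith
  have hdet : IsUnit S.det := by
    have hd : S.det * S.det = A.det := by rw [← Matrix.det_mul, hSS]
    have hAdet : A.det ≠ 0 := ne_of_gt hApd.det_pos
    exact isUnit_iff_ne_zero.mpr (fun h0 => hAdet (by rw [← hd, h0, mul_zero]))
  have hmulinv : S * S⁻¹ = 1 := Matrix.mul_nonsing_inv S hdet
  rw [specNorm]
  apply ContinuousLinearMap.opNorm_le_bound _ (by positivity)
  intro v
  set T := Matrix.toEuclideanCLM (𝕜 := ℝ) (n := Fin d)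
  set w := T S⁻¹ v with hw
  have hv : T S w = v := by
    rw [hw]
    have : T S (T S⁻¹ v) = (T S * T S⁻¹) v := rfl
    rw [this, ← map_mul, hmulinv, map_one, ContinuousLinearMap.one_apply]
  set w' := WithLp.equiv 2 (Fin d → ℝ) w with hw'
  have hww : w = (WithLp.equiv 2 (Fin d → ℝ)).symm w' := rfl
  have hTSw : T S w = (WithLp.equiv 2 (Fin d → ℝ)).symm (S.mulVec w') := by
    rw [hww, WithLp.equiv_symm_apply, Matrix.toEuclideanCLM_toLp]
  have hnormsq : ‖T S w‖ ^ 2 = dotProduct w' (A.mulVec w') := by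
    rw [hTSw, enorm_eq, ← hSS, ← Matrix.mulVec_mulVec, Matrix.dotProduct_mulVec,
      ← Matrix.mulVec_transpose, hSsym, dotProduct_comm]
  have hwnorm : ‖w‖ ^ 2 = dotProduct w' w' := by rw [hww, enorm_eq]
  have key : c * ‖w‖ ^ 2 ≤ ‖v‖ ^ 2 := by
    rw [← hv, hnormsq, hwnorm]; exact dot_lower h w'
  have h1 : Real.sqrt c * ‖w‖ ≤ ‖v‖ := by
    have hsq : (Real.sqrt c * ‖w‖) ^ 2 ≤ ‖v‖ ^ 2 := by
      rw [mul_pow, Real.sq_sqrt hc.le]; exact key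
    have := Real.sqrt_le_sqrt hsq
    rwa [Real.sqrt_sq (by positivity), Real.sqrt_sq (norm_nonneg _)] at this
  rw [inv_mul_eq_div, le_div_iff₀ (Real.sqrt_pos.mpr hc)]
  linarith [h1, mul_comm (Real.sqrt c) ‖w‖]

/-- Lemma B.2 in the paper: relative Hessian perturbation bound,
`‖H(x₁)^{-1/2} H(x₂) H(x₁)^{-1/2} - I‖ ≤ (L/λmin^{3/2})·‖x₁ - x₂‖_{H*}`. -/
theorem stmt19
    {d : ℕ} (f : (Fin d → ℝ) → ℝ) (g : (Fin d → ℝ) → Fin d → ℝ)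
    (H : (Fin d → ℝ) → Matrix (Fin d) (Fin d) ℝ)
    (lmin lmax L : ℝ) (hlmin : 0 < lmin) (hlle : lmin ≤ lmax) (hL : 0 < L)
    (hf : ContDiff ℝ 2 f)
    (hgrad : ∀ y v, fderiv ℝ f y v = dotProduct (g y) v)
    (hhess : ∀ y u v, fderiv ℝ (fun z => fderiv ℝ f z v) y u =
      dotProduct u ((H y).mulVec v))
    (hHsym : ∀ y, (H y).IsSymm)
    (hpsd : ∀ y, (H y).PosSemidef)
    (hlow : ∀ y, (H y - lmin • (1 : Matrix (Fin d) (Fin d) ℝ)).PosSemidef)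
    (hup : ∀ y, (lmax • (1 : Matrix (Fin d) (Fin d) ℝ) - H y).PosSemidef)
    (hLip : ∀ y z, specNorm (H y - H z) ≤ L * vnorm (y - z))
    (xstar : Fin d → ℝ) (hmin : ∀ y, f xstar ≤ f y)
    (huniq : ∀ y, (∀ z, f y ≤ f z) → y = xstar) :
    ∀ x₁ x₂ : Fin d → ℝ,
      specNorm (((hpsd x₁).sqrt)⁻¹ * H x₂ * ((hpsd x₁).sqrt)⁻¹ - 1) ≤
        (L / lmin ^ ((3 : ℝ) / 2)) * Mnorm (H xstar) (x₁ - x₂) := by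
  intro x₁ x₂
  set S := ((hpsd x₁).sqrt) with hSdef
  have hSS : S * S = H x₁ := (hpsd x₁).sqrt_mul_self
  have hApd : (H x₁).PosDef := by
    refine Matrix.PosDef.of_dotProduct_mulVec_pos (hpsd x₁).1 fun x hx => ?_
    have h1 := dot_lower (hlow x₁) x
    have hnn : 0 ≤ dotProduct x x := by
      simp only [dotProduct]
      exact Finset.sum_nonneg fun i _ => mul_self_nonneg _
    have h2 : 0 < dotProduct x x := by
      rcases lt_or_eq_of_le hnn with h' | h'
      · exact h'
      · exact absurd (dotProduct_self_eq_zero.mp h'.symm) hx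
    simp only [star_trivial]
    nlinarith
  have hdet : IsUnit S.det := by
    have hd : S.det * S.det = (H x₁).det := by rw [← Matrix.det_mul, hSS]
    have hAdet : (H x₁).det ≠ 0 := ne_of_gt hApd.det_pos
    exact isUnit_iff_ne_zero.mpr (fun h0 => hAdet (by rw [← hd, h0, mul_zero]))
  have hinvmul : S⁻¹ * S = 1 := Matrix.nonsing_inv_mul S hdet
  have hmulinv : S * S⁻¹ = 1 := Matrix.mul_nonsing_inv S hdet
  -- identity
  have hid : S⁻¹ * H x₂ * S⁻¹ - 1 = S⁻¹ * (H x₂ - H x₁) * S⁻¹ := by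
    have h1 : S⁻¹ * H x₁ * S⁻¹ = 1 := by
      rw [← hSS, ← mul_assoc, mul_assoc (S⁻¹ * S), hmulinv, mul_one, hinvmul]
    rw [mul_sub, sub_mul, h1]
  rw [hid]
  -- norm bounds
  have hSinv : specNorm S⁻¹ ≤ (Real.sqrt lmin)⁻¹ :=
    specNorm_inv_sqrt_le hlmin (hpsd x₁) (hlow x₁)
  have hSinv0 : 0 ≤ specNorm S⁻¹ := norm_nonneg _
  have hdiff : specNorm (H x₂ - H x₁) ≤ L * vnorm (x₁ - x₂) := by
    have := hLip x₂ x₁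
    have hvv : vnorm (x₂ - x₁) = vnorm (x₁ - x₂) := by
      unfold vnorm
      congr 1
      apply Finset.sum_congr rfl
      intro i _
      rw [show (x₂ - x₁) i = -((x₁ - x₂) i) by simp [Pi.sub_apply], neg_sq]
    rwa [hvv] at this
  have hd0 : 0 ≤ specNorm (H x₂ - H x₁) := norm_nonneg _
  have hchain : specNorm (S⁻¹ * (H x₂ - H x₁) * S⁻¹) ≤
      (Real.sqrt lmin)⁻¹ * (L * vnorm (x₁ - x₂)) * (Real.sqrt lmin)⁻¹ := by
    calc specNorm (S⁻¹ * (H x₂ - H x₁) * S⁻¹)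
        ≤ specNorm (S⁻¹ * (H x₂ - H x₁)) * specNorm S⁻¹ := specNorm_mul_le _ _
      _ ≤ specNorm S⁻¹ * specNorm (H x₂ - H x₁) * specNorm S⁻¹ := by
          apply mul_le_mul_of_nonneg_right (specNorm_mul_le _ _) hSinv0
      _ ≤ (Real.sqrt lmin)⁻¹ * (L * vnorm (x₁ - x₂)) * (Real.sqrt lmin)⁻¹ := by
          have hsp : 0 < Real.sqrt lmin := Real.sqrt_pos.mpr hlmin
          have h1 : specNorm S⁻¹ * specNorm (H x₂ - H x₁) ≤
              (Real.sqrt lmin)⁻¹ * (L * vnorm (x₁ - x₂)) :=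
            mul_le_mul hSinv hdiff hd0 (by positivity)
          have hvn0' : (0:ℝ) ≤ vnorm (x₁ - x₂) := Real.sqrt_nonneg _
          exact mul_le_mul h1 hSinv hSinv0 (by positivity)
  -- vnorm vs Mnorm
  have hMn : vnorm (x₁ - x₂) ≤ (Real.sqrt lmin)⁻¹ * Mnorm (H xstar) (x₁ - x₂) := by
    set v := x₁ - x₂
    have hlowb := dot_lower (hlow xstar) v
    have hvv : dotProduct v v = ∑ i, v i ^ 2 := by
      simp [dotProduct, pow_two]
    have h1 : Real.sqrt lmin * vnorm v ≤ Mnorm (H xstar) v := by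
      rw [vnorm, Mnorm, ← Real.sqrt_mul hlmin.le]
      apply Real.sqrt_le_sqrt
      rw [← hvv]; exact hlowb
    have hsp : 0 < Real.sqrt lmin := Real.sqrt_pos.mpr hlmin
    rw [inv_mul_eq_div, le_div_iff₀ hsp]
    linarith [mul_comm (Real.sqrt lmin) (vnorm v)]
  -- arithmetic
  have hvn0 : 0 ≤ vnorm (x₁ - x₂) := Real.sqrt_nonneg _
  have hsp : 0 < Real.sqrt lmin := Real.sqrt_pos.mpr hlmin
  have hpow : lmin ^ ((3 : ℝ) / 2) = Real.sqrt lmin ^ 3 := by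
    rw [Real.sqrt_eq_rpow, ← Real.rpow_natCast (lmin ^ ((1:ℝ)/2)) 3,
      ← Real.rpow_mul hlmin.le]
    norm_num
  calc specNorm (S⁻¹ * (H x₂ - H x₁) * S⁻¹)
      ≤ (Real.sqrt lmin)⁻¹ * (L * vnorm (x₁ - x₂)) * (Real.sqrt lmin)⁻¹ := hchain
    _ ≤ (Real.sqrt lmin)⁻¹ * (L * ((Real.sqrt lmin)⁻¹ * Mnorm (H xstar) (x₁ - x₂))) *
          (Real.sqrt lmin)⁻¹ := by
        apply mul_le_mul_of_nonneg_right _ (by positivity)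
        apply mul_le_mul_of_nonneg_left _ (by positivity)
        exact mul_le_mul_of_nonneg_left hMn hL.le
    _ = (L / lmin ^ ((3 : ℝ) / 2)) * Mnorm (H xstar) (x₁ - x₂) := by
        rw [hpow]
        have hs : Real.sqrt lmin ≠ 0 := hsp.ne'
        field_simp
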